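/- Let $\Omega$ be a commutative semigroup, $(L, \{\cdot,\cdot\}_{\alpha,\beta}, p_\alpha, q_\alpha)_{\alpha,\beta\in\Omega}$ a BiHom-$\Omega$-Lie algebra with $p_\alpha, q_\alpha$ bijective, and $(R_\alpha)_{\alpha\in\Omega}$ a Rota-Baxter family of weight $0$ on $L$ commuting with $p_\alpha$ and $q_\alpha$. Define $x\blacktriangleright_{\alpha,\beta}y := \{R_\alpha(x), y\}_{\alpha,\beta}$. Then $(L, \blacktriangleright_{\alpha,\beta}, p_\alpha, q_\alpha)_{\alpha,\beta\in\Omega}$ is a BiHom-$\Omega$-pre-Lie algebra. -/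
import Mathlib


/-- A Rota-Baxter family of weight 0 on a BiHom-Ω-Lie algebra with bijective structure
maps induces a BiHom-Ω-pre-Lie algebra. -/
theorem stmt_15
    {K : Type*} [Field K] {Ω : Type*} [CommSemigroup Ω]
    {L : Type*} [AddCommGroup L] [Module K L]
    (br : Ω → Ω → L →ₗ[K] L →ₗ[K] L)
    (p q : Ω → L →ₗ[K] L)
    -- (L, br, p, q) is a BiHom-Ω-Lie algebra
    (hp : ∀ (α β : Ω) (x y : L), p (α * β) (br α β x y) = br α β (p α x) (p β y))
    (hq : ∀ (α β : Ω) (x y : L), q (α * β) (br α β x y) = br α β (q α x) (q β y))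
    (hpq : ∀ (α : Ω) (x : L), p α (q α x) = q α (p α x))
    (hskew : ∀ (α β : Ω) (x y : L), br α β (q α x) (p β y) = - br β α (q β y) (p α x))
    (hjac : ∀ (α β γ : Ω) (x y z : L),
      br α (β * γ) (q α (q α x)) (br β γ (q β y) (p γ z))
        + br β (γ * α) (q β (q β y)) (br γ α (q γ z) (p α x))
        + br γ (α * β) (q γ (q γ z)) (br α β (q α x) (p β y)) = 0)
    -- p, q are bijective
    (hpbij : ∀ (α : Ω), Function.Bijective (p α))
    (hqbij : ∀ (α : Ω), Function.Bijective (q α))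
    -- (R_α) is a Rota-Baxter family of weight 0, commuting with p and q
    (R : Ω → L →ₗ[K] L)
    (hRB : ∀ (α β : Ω) (x y : L),
      br α β (R α x) (R β y) = R (α * β) (br α β (R α x) y + br α β x (R β y)))
    (hRp : ∀ (α : Ω) (x : L), R α (p α x) = p α (R α x))
    (hRq : ∀ (α : Ω) (x : L), R α (q α x) = q α (R α x))
    -- the induced operation
    (ob : Ω → Ω → L → L → L)
    (hob : ∀ (α β : Ω) (x y : L), ob α β x y = br α β (R α x) y) :
    -- (L, ob, p, q) is a BiHom-Ω-pre-Lie algebra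
    (∀ (α β : Ω) (x y : L), p (α * β) (ob α β x y) = ob α β (p α x) (p β y)) ∧
    (∀ (α β : Ω) (x y : L), q (α * β) (ob α β x y) = ob α β (q α x) (q β y)) ∧
    (∀ (α β γ : Ω) (x y z : L),
      ob α (β * γ) (p α (q α x)) (ob β γ (p β y) z)
          - ob (α * β) γ (ob α β (q α x) (p β y)) (q γ z)
        = ob β (α * γ) (p β (q β y)) (ob α γ (p α x) z)
          - ob (β * α) γ (ob β α (q β y) (p α x)) (q γ z)) := by
  refine ⟨?_, ?_, ?_⟩
  · intro α β x y
    simp only [hob, hp, hRp]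
  · intro α β x y
    simp only [hob, hq, hRq]
  · intro α β γ x y z
    simp only [hob, hRp, hRq]
    rw [mul_comm β α]
    -- notation: X := R α x, Y := R β y
    set X := R α x with hX
    set Y := R β y with hY
    -- Rota-Baxter consequence
    have e1 : R (α*β) (br α β (q α X) (p β y))
        = br α β (q α X) (p β Y) + R (α*β) (br β α (q β Y) (p α x)) := by
      have h := hRB α β (q α x) (p β y)
      rw [hRq, hRp, hskew α β x Y, map_add, map_neg] at h
      rw [h]
      abel
    -- key (BiHom-Jacobi derived) identity
    have key : br α (β*γ) (p α (q α X)) (br β γ (p β Y) z)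
        - br β (α*γ) (p β (q β Y)) (br α γ (p α X) z)
        - br (α*β) γ (br α β (q α X) (p β Y)) (q γ z) = 0 := by
      obtain ⟨u, hu⟩ := (hqbij α).2 (p α X)
      obtain ⟨v, hv⟩ := (hqbij β).2 (p β Y)
      obtain ⟨w, hw⟩ := (hpbij γ).2 z
      have J := hjac α β γ u v w
      rw [hskew γ α w u] at J
      have t3 : br (α*β) γ (br α β (q α X) (p β Y)) (q γ z)
          = - br γ (α*β) (q γ (q γ w)) (br α β (p α X) (p β v)) := by
        have h := hskew (α*β) γ (br α β X v) (q γ w)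
        rw [hq, hv, hpq, hw, hp] at h
        exact h
      rw [hu, hv, hw, mul_comm γ α] at J
      rw [← hpq α, ← hpq β] at J
      rw [t3]
      simp only [map_neg] at J ⊢
      abel_nf at J ⊢
      exact J
    rw [e1]
    simp only [map_add, LinearMap.add_apply]
    abel_nf at key ⊢
    linear_combination (norm := abel) key
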